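/- With the setup of the execution-risk recursion (Markov chain with transitions T, failure probabilities r̃, safe transitions T̃(s,s') = T(s,s')(1 − r̃(s))), define the safe-reachability measure x(s₀, 0) = 1 and x(s, k) = Σ_{s'} x(s', k−1) T̃(s', s) for k ≥ 1. Then the execution risk from the initial state satisfies Er(s₀, 0) = r̃(s₀) + Σ_{k=1}^{h} Σ_{s} x(s, k) · r̃(s), i.e., the total failure probability is a linear function of the flow variables x. -/
import Mathlib


open Finset

variable {S : Type*} [Fintype S] [DecidableEq S]

/-- Probability of a trajectory of length `n` under transition kernel `T`. -/
def pathProb (T : S → S → ℝ) {n : ℕ} (p : Fin (n + 1) → S) : ℝ :=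
  ∏ t : Fin n, T (p t.castSucc) (p t.succ)

/-- Probability that no failure occurs along a trajectory. -/
def pathSafe (r : S → ℝ) {n : ℕ} (p : Fin (n + 1) → S) : ℝ :=
  ∏ t : Fin (n + 1), (1 - r (p t))

/-- Execution risk: probability that some failure occurs at a time in
`{k, …, h}` given state `s` at time `k`. -/
def execRisk (T : S → S → ℝ) (r : S → ℝ) (h k : ℕ) (s : S) : ℝ :=
  1 - ∑ p : Fin (h - k + 1) → S,
        (if p 0 = s then pathProb T p * pathSafe r p else 0)

/-- The safe transition kernel `T̃(s,s') = T(s,s')(1 − r̃(s))`. -/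
def safeT (T : S → S → ℝ) (r : S → ℝ) (s s' : S) : ℝ :=
  T s s' * (1 - r s)

/-- The safe-reachability flow: `x(s₀,0) = 1` and
`x(s,k) = Σ_{s'} x(s',k−1) T̃(s',s)`. -/
def flow (T : S → S → ℝ) (r : S → ℝ) (s₀ : S) : ℕ → S → ℝ
  | 0, s => if s = s₀ then 1 else 0
  | k + 1, s => ∑ s', flow T r s₀ k s' * safeT T r s' s

lemma pathProb_snoc (T : S → S → ℝ) {n : ℕ} (q : Fin (n + 1) → S) (s : S) :
    pathProb T (Fin.snoc q s : Fin (n + 2) → S) = pathProb T q * T (q (Fin.last n)) s := by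
  unfold pathProb
  rw [Fin.prod_univ_castSucc]
  congr 1
  · apply Finset.prod_congr rfl
    intro t _
    rw [Fin.succ_castSucc, Fin.snoc_castSucc, Fin.snoc_castSucc]
  · rw [Fin.succ_last, Fin.snoc_castSucc, Fin.snoc_last]

lemma pathSafe_snoc (r : S → ℝ) {n : ℕ} (q : Fin (n + 1) → S) (s : S) :
    pathSafe r (Fin.snoc q s : Fin (n + 2) → S) = pathSafe r q * (1 - r s) := by
  unfold pathSafe
  rw [Fin.prod_univ_castSucc]
  simp

def G (T : S → S → ℝ) (r : S → ℝ) (s₀ : S) (n : ℕ) (s : S) : ℝ :=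
  ∑ p : Fin (n + 1) → S,
    if p 0 = s₀ ∧ p (Fin.last n) = s then pathProb T p * pathSafe r p else 0

lemma G_eq (T : S → S → ℝ) (r : S → ℝ) (s₀ : S) (n : ℕ) (s : S) :
    G T r s₀ n s = flow T r s₀ n s * (1 - r s) := by
  induction n generalizing s with
  | zero =>
    unfold G flow
    rw [Fintype.sum_equiv (Equiv.funUnique (Fin 1) S)
      (fun p => if p 0 = s₀ ∧ p (Fin.last 0) = s then pathProb T p * pathSafe r p else 0)
      (fun x => if x = s₀ ∧ x = s then 1 - r x else 0)
      (fun p => by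
        have h0 : (Fin.last 0) = (0 : Fin 1) := rfl
        simp [pathProb, pathSafe, h0, Equiv.funUnique])]
    by_cases hs : s = s₀
    · subst hs
      rw [Finset.sum_eq_single s]
      · simp
      · intro b _ hb; simp [hb]
      · simp
    · rw [Finset.sum_eq_zero, if_neg (by tauto), zero_mul]
      intro b _
      rw [if_neg]
      rintro ⟨h1, h2⟩
      exact hs (h2.symm.trans h1)
  | succ n ih =>
    have key :
        G T r s₀ (n + 1) s
          = (∑ s', G T r s₀ n s' * T s' s) * (1 - r s) := by
      unfold G
      rw [← Fintype.sum_equiv (Fin.snocEquiv (fun _ : Fin (n+2) => S))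
          (fun q : S × (Fin (n+1) → S) =>
            if (Fin.snoc q.2 q.1 : Fin (n+2) → S) 0 = s₀ ∧
               (Fin.snoc q.2 q.1 : Fin (n+2) → S) (Fin.last (n+1)) = s
            then pathProb T (Fin.snoc q.2 q.1 : Fin (n+2) → S) *
                 pathSafe r (Fin.snoc q.2 q.1 : Fin (n+2) → S) else 0)
          _ (fun q => rfl)]
      rw [Fintype.sum_prod_type]
      have hzero : ∀ (q : Fin (n+1) → S) (x : S),
          (Fin.snoc q x : Fin (n+2) → S) 0 = q 0 := by
        intro q x
        have : (0 : Fin (n+2)) = Fin.castSucc 0 := rfl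
        rw [this, Fin.snoc_castSucc]
      have step : ∀ x : S, ∀ q : Fin (n+1) → S,
          (if (Fin.snoc q x : Fin (n+2) → S) 0 = s₀ ∧
              (Fin.snoc q x : Fin (n+2) → S) (Fin.last (n+1)) = s
           then pathProb T (Fin.snoc q x : Fin (n+2) → S) *
                pathSafe r (Fin.snoc q x : Fin (n+2) → S) else 0)
          = (if x = s then
              (if q 0 = s₀ then pathProb T q * pathSafe r q * T (q (Fin.last n)) x else 0)
                * (1 - r x)
             else 0) := by
        intro x q
        rw [hzero, Fin.snoc_last, pathProb_snoc, pathSafe_snoc]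
        by_cases h1 : q 0 = s₀ <;> by_cases h2 : x = s <;> simp [h1, h2] <;> ring
      simp only [step]
      have pull : ∀ x : S,
          (∑ q : Fin (n+1) → S, if x = s then
              (if q 0 = s₀ then pathProb T q * pathSafe r q * T (q (Fin.last n)) x else 0)
                * (1 - r x) else 0)
          = (if x = s then
              (∑ q : Fin (n+1) → S,
                if q 0 = s₀ then pathProb T q * pathSafe r q * T (q (Fin.last n)) x else 0)
                * (1 - r x) else 0) := by
        intro x
        split_ifs with hx
        · rw [Finset.sum_mul]
        · simp
      simp only [pull]
      rw [Finset.sum_ite_eq' (Finset.univ : Finset S) s]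
      simp only [mem_univ, if_true]
      congr 1
      simp only [Finset.sum_mul, ite_mul, zero_mul]
      rw [Finset.sum_comm]
      apply Finset.sum_congr rfl
      intro q _
      by_cases h1 : q 0 = s₀
      · simp only [h1, true_and, ite_mul, zero_mul]
        rw [Finset.sum_ite_eq (Finset.univ : Finset S) (q (Fin.last n))
          (fun b => pathProb T q * pathSafe r q * T b s)]
        simp
      · simp [h1]
    rw [key]
    show _ = (∑ s', flow T r s₀ n s' * safeT T r s' s) * (1 - r s)
    congr 1
    apply Finset.sum_congr rfl
    intro s' _
    rw [ih s']
    unfold safeT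
    ring

lemma sum_paths (T : S → S → ℝ) (r : S → ℝ) (s₀ : S) (n : ℕ) :
    (∑ p : Fin (n + 1) → S, if p 0 = s₀ then pathProb T p * pathSafe r p else 0)
      = ∑ s, flow T r s₀ n s * (1 - r s) := by
  have : ∀ p : Fin (n + 1) → S,
      (if p 0 = s₀ then pathProb T p * pathSafe r p else 0)
        = ∑ s, if p 0 = s₀ ∧ p (Fin.last n) = s then pathProb T p * pathSafe r p else 0 := by
    intro p
    by_cases h1 : p 0 = s₀
    · simp only [h1, true_and]
      rw [Finset.sum_ite_eq (Finset.univ : Finset S) (p (Fin.last n))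
        (fun _ => pathProb T p * pathSafe r p)]
      simp
    · simp [h1]
  simp only [this]
  rw [Finset.sum_comm]
  exact Finset.sum_congr rfl fun s _ => G_eq T r s₀ n s

lemma tele (T : S → S → ℝ) (r : S → ℝ) (s₀ : S) (hT1 : ∀ s, ∑ s', T s s' = 1) (n : ℕ) :
    ∑ s, flow T r s₀ n s * (1 - r s)
      = 1 - ∑ k ∈ Finset.range (n + 1), ∑ s, flow T r s₀ k s * r s := by
  induction n with
  | zero =>
    simp [flow, ite_mul]
  | succ n ih =>
    have hmass : ∑ s, flow T r s₀ (n + 1) s = ∑ s, flow T r s₀ n s * (1 - r s) := by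
      show ∑ s, ∑ s', flow T r s₀ n s' * safeT T r s' s = _
      rw [Finset.sum_comm]
      apply Finset.sum_congr rfl
      intro s' _
      unfold safeT
      rw [show ∀ f : S → ℝ, ∑ s, flow T r s₀ n s' * (T s' s * (1 - r s')) =
        flow T r s₀ n s' * (1 - r s') * ∑ s, T s' s from fun _ => by
          rw [Finset.mul_sum]; exact Finset.sum_congr rfl fun s _ => by ring]
      · rw [hT1 s', mul_one]
      · exact fun _ => 0
    have expand : ∑ s, flow T r s₀ (n + 1) s * (1 - r s)
        = ∑ s, flow T r s₀ (n + 1) s - ∑ s, flow T r s₀ (n + 1) s * r s := by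
      rw [← Finset.sum_sub_distrib]
      exact Finset.sum_congr rfl fun s _ => by ring
    rw [expand, hmass, ih, Finset.sum_range_succ (fun k => ∑ s, flow T r s₀ k s * r s) (n + 1)]
    ring

/-- The execution risk from the initial state is the linear function
`Er(s₀,0) = r̃(s₀) + Σ_{k=1}^{h} Σ_{s} x(s,k) · r̃(s)` of the flow variables. -/
theorem execRisk_linear_in_flow
    (T : S → S → ℝ) (r : S → ℝ) (s₀ : S) (h : ℕ)
    (hT0 : ∀ s s', 0 ≤ T s s') (hT1 : ∀ s, ∑ s', T s s' = 1)
    (hr0 : ∀ s, 0 ≤ r s) (hr1 : ∀ s, r s ≤ 1) :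
    execRisk T r h 0 s₀ =
      r s₀ + ∑ k ∈ Finset.Icc 1 h, ∑ s, flow T r s₀ k s * r s := by
  unfold execRisk
  rw [sum_paths, Nat.sub_zero, tele T r s₀ hT1 h]
  have hsplit : Finset.range (h + 1) = insert 0 (Finset.Icc 1 h) := by
    ext k; simp [Nat.lt_succ_iff]; omega
  rw [hsplit, Finset.sum_insert (by simp)]
  have h00 : ∑ s, flow T r s₀ 0 s * r s = r s₀ := by
    simp only [flow, ite_mul, one_mul, zero_mul]
    rw [Finset.sum_ite_eq' (Finset.univ : Finset S) s₀]
    simp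
  rw [h00]
  ring
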